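/- For an L-smooth function accessed through a gradient with relative error α ∈ [0,1), the method x^{k+1} = x^k - h∇̃f(x^k) with step h = (1-α)/(L(1+α)²) satisfies f(x^{k+1}) ≤ f(x^k) - ((1-α)²/(2L(1+α)²))‖∇f(x^k)‖². -/

import Mathlib

local notation "⟪" x ", " y "⟫" => @inner ℝ _ _ x y

/-- Descent lemma: an `L`-smooth function admits the quadratic upper bound. -/
theorem descent_lemma_aux {n : ℕ} (f : EuclideanSpace ℝ (Fin n) → ℝ)
    (g : EuclideanSpace ℝ (Fin n) → EuclideanSpace ℝ (Fin n)) (L : ℝ) (hL : 0 < L)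
    (hgrad : ∀ x, HasGradientAt f (g x) x)
    (hLip : ∀ x y, ‖g x - g y‖ ≤ L * ‖x - y‖)
    (x y : EuclideanSpace ℝ (Fin n)) :
    f y ≤ f x + ⟪g x, y - x⟫ + L / 2 * ‖y - x‖ ^ 2 := by
  set v := y - x with hv
  set φ : ℝ → ℝ := fun t => f (x + t • v) - t * ⟪g x, v⟫ - L * t ^ 2 / 2 * ‖v‖ ^ 2 with hφ
  have hderiv : ∀ t : ℝ, HasDerivAt φ
      (⟪g (x + t • v), v⟫ - ⟪g x, v⟫ - L * t * ‖v‖ ^ 2) t := by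
    intro t
    have hc : HasDerivAt (fun t : ℝ => x + t • v) v t := by
      simpa using ((hasDerivAt_id t).smul_const v).const_add x
    have hf : HasDerivAt (fun t : ℝ => f (x + t • v)) ⟪g (x + t • v), v⟫ t := by
      have := ((hgrad (x + t • v)).hasFDerivAt).comp_hasDerivAt t hc
      simp at this; exact this
    have h2 : HasDerivAt (fun t : ℝ => t * ⟪g x, v⟫) ⟪g x, v⟫ t := by
      simpa using (hasDerivAt_id t).mul_const (⟪g x, v⟫ : ℝ)
    have h3 : HasDerivAt (fun t : ℝ => L * t ^ 2 / 2 * ‖v‖ ^ 2) (L * t * ‖v‖ ^ 2) t := by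
      have : HasDerivAt (fun t : ℝ => L * t ^ 2 / 2 * ‖v‖ ^ 2)
          (L * (2 * t ^ 1) / 2 * ‖v‖ ^ 2) t :=
        (((hasDerivAt_pow 2 t).const_mul L).div_const 2).mul_const _
      convert this using 1
      ring
    exact (hf.sub h2).sub h3
  have hanti : AntitoneOn φ (Set.Icc (0:ℝ) 1) := by
    apply antitoneOn_of_deriv_nonpos (convex_Icc 0 1)
    · exact fun t _ => ((hderiv t).differentiableAt.continuousAt).continuousWithinAt
    · exact fun t _ => (hderiv t).differentiableAt.differentiableWithinAt
    · intro t ht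
      rw [interior_Icc] at ht
      rw [(hderiv t).deriv]
      have hb : ⟪g (x + t • v) - g x, v⟫ ≤ L * t * ‖v‖ ^ 2 := by
        calc ⟪g (x + t • v) - g x, v⟫ ≤ ‖g (x + t • v) - g x‖ * ‖v‖ :=
              real_inner_le_norm _ _
          _ ≤ (L * ‖(x + t • v) - x‖) * ‖v‖ := by
              gcongr; exact hLip _ _
          _ = L * t * ‖v‖ ^ 2 := by
              rw [add_sub_cancel_left, norm_smul]
              simp [abs_of_nonneg ht.1.le]
              ring
      have := hb
      rw [inner_sub_left] at this
      linarith
  have h01 : φ 1 ≤ φ 0 := hanti (by norm_num) (by norm_num) (by norm_num)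
  have hy : x + (1:ℝ) • v = y := by simp [hv]
  simp only [hφ, hy, one_mul, one_pow, zero_smul, add_zero, zero_mul, zero_pow,
    mul_zero, zero_div, sub_zero] at h01
  linarith [h01]

theorem relative_error_gradient_step_decrease {n : ℕ} (f : EuclideanSpace ℝ (Fin n) → ℝ)
    (g gt : EuclideanSpace ℝ (Fin n) → EuclideanSpace ℝ (Fin n)) (L α : ℝ)
    (hL : 0 < L) (hα0 : 0 ≤ α) (hα1 : α < 1)
    (hgrad : ∀ x, HasGradientAt f (g x) x)
    (hLip : ∀ x y, ‖g x - g y‖ ≤ L * ‖x - y‖)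
    (herr : ∀ x, ‖gt x - g x‖ ≤ α * ‖g x‖)
    (x : EuclideanSpace ℝ (Fin n)) :
    f (x - ((1 - α) / (L * (1 + α) ^ 2)) • gt x)
      ≤ f x - (1 - α) ^ 2 / (2 * L * (1 + α) ^ 2) * ‖g x‖ ^ 2 := by
  set h : ℝ := (1 - α) / (L * (1 + α) ^ 2) with hh
  set y : EuclideanSpace ℝ (Fin n) := x - h • gt x with hy
  have hdesc := descent_lemma_aux f g L hL hgrad hLip x y
  have hyx : y - x = -(h • gt x) := by simp [hy]
  have hα1p : (0:ℝ) < 1 + α := by linarith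
  have hh_pos : 0 ≤ h := div_nonneg (by linarith) (by positivity)
  -- inner product lower bound
  have hinner : (1 - α) * ‖g x‖ ^ 2 ≤ ⟪g x, gt x⟫ := by
    have h1 : ⟪g x, gt x⟫ = ‖g x‖ ^ 2 + ⟪g x, gt x - g x⟫ := by
      rw [inner_sub_right, real_inner_self_eq_norm_sq]; ring
    have h2 : |⟪g x, gt x - g x⟫| ≤ α * ‖g x‖ ^ 2 := by
      calc |⟪g x, gt x - g x⟫| ≤ ‖g x‖ * ‖gt x - g x‖ := abs_real_inner_le_norm _ _
        _ ≤ ‖g x‖ * (α * ‖g x‖) := by gcongr; exact herr x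
        _ = α * ‖g x‖ ^ 2 := by ring
    have := abs_le.mp h2
    nlinarith [this.1]
  have hgt : ‖gt x‖ ≤ (1 + α) * ‖g x‖ := by
    calc ‖gt x‖ = ‖g x + (gt x - g x)‖ := by congr 1; abel
      _ ≤ ‖g x‖ + ‖gt x - g x‖ := norm_add_le _ _
      _ ≤ ‖g x‖ + α * ‖g x‖ := by gcongr; exact herr x
      _ = (1 + α) * ‖g x‖ := by ring
  have hkey : f y ≤ f x - h * ⟪g x, gt x⟫ + L / 2 * h ^ 2 * ‖gt x‖ ^ 2 := by
    rw [hyx] at hdesc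
    have e1 : ⟪g x, -(h • gt x)⟫ = -(h * ⟪g x, gt x⟫) := by
      rw [inner_neg_right, real_inner_smul_right]
    have e2 : ‖-(h • gt x)‖ ^ 2 = h ^ 2 * ‖gt x‖ ^ 2 := by
      rw [norm_neg, norm_smul]
      simp [abs_of_nonneg hh_pos, mul_pow]
    rw [e1, e2] at hdesc
    linarith
  have hgt2 : ‖gt x‖ ^ 2 ≤ (1 + α) ^ 2 * ‖g x‖ ^ 2 := by
    have := sq_le_sq' (by nlinarith [norm_nonneg (gt x), norm_nonneg (g x)]) hgt
    nlinarith
  have hfinal : f y ≤ f x - h * ((1 - α) * ‖g x‖ ^ 2)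
      + L / 2 * h ^ 2 * ((1 + α) ^ 2 * ‖g x‖ ^ 2) := by
    have t1 : h * ((1 - α) * ‖g x‖ ^ 2) ≤ h * ⟪g x, gt x⟫ :=
      mul_le_mul_of_nonneg_left hinner hh_pos
    have t2 : L / 2 * h ^ 2 * ‖gt x‖ ^ 2 ≤ L / 2 * h ^ 2 * ((1 + α) ^ 2 * ‖g x‖ ^ 2) := by
      gcongr
    linarith
  have harith : - h * ((1 - α) * ‖g x‖ ^ 2) + L / 2 * h ^ 2 * ((1 + α) ^ 2 * ‖g x‖ ^ 2)
      = - ((1 - α) ^ 2 / (2 * L * (1 + α) ^ 2) * ‖g x‖ ^ 2) := by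
    rw [hh]
    field_simp
    ring
  linarith [hfinal, harith]
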